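/- Every stable matching of a school choice problem is a Nash equilibrium outcome of the preference revelation game induced by the tiered deferred acceptance mechanism, for any tier structure. -/

import Mathlib

set_option linter.unusedSectionVars false

namespace SchoolChoice

/-- A strict preference over `S ∪ {self}`, encoded by an injective ranking function on
`Option S`; `none` denotes being unmatched (the student himself), and a smaller rank
means more preferred. Injective rankings on a finite set are exactly strict linear orders. -/
structure Pref (S : Type) where
  rank : Option S → ℕ
  inj : Function.Injective rank

/-- Quotas together with strict priorities of the schools: `prank s` ranks the students
at school `s`, a smaller rank meaning higher priority. -/
structure Prio (I S : Type) where
  quota : S → ℕ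
  prank : S → I → ℕ
  inj : ∀ s, Function.Injective (prank s)

variable {I S : Type} [Fintype I] [Fintype S] [DecidableEq I] [DecidableEq S]

/-- `i` has strictly higher priority than `j` at school `s`. -/
def Prio.higher (E : Prio I S) (s : S) (i j : I) : Prop :=
  E.prank s i < E.prank s j

/-- A matching assigns to each student a school or himself (`none`). -/
abbrev Matching (I S : Type) := I → Option S

/-- The set of students assigned to school `s`. -/
def assigned (μ : Matching I S) (s : S) : Finset I :=
  Finset.univ.filter (fun i => μ i = some s)

/-- Quotas are respected. -/
def Feasible (E : Prio I S) (μ : Matching I S) : Prop :=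
  ∀ s, (assigned μ s).card ≤ E.quota s

/-- `(i, s)` is a blocking pair of `μ` with respect to preferences `R`:
`i` strictly prefers `s` to his assignment, and either `s` has an empty seat
(wastefulness) or some student assigned to `s` has lower priority than `i`
(justified envy). -/
def Blocks (E : Prio I S) (R : I → Pref S) (μ : Matching I S) (i : I) (s : S) : Prop :=
  (R i).rank (some s) < (R i).rank (μ i) ∧
    ((assigned μ s).card < E.quota s ∨ ∃ j, μ j = some s ∧ E.higher s i j)

/-- Individual rationality: every student weakly prefers his assignment to being unmatched. -/
def IndivRat (R : I → Pref S) (μ : Matching I S) : Prop :=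
  ∀ i, (R i).rank (μ i) ≤ (R i).rank none

/-- Non-wastefulness: no student prefers a school with an empty seat to his assignment. -/
def NonWasteful (E : Prio I S) (R : I → Pref S) (μ : Matching I S) : Prop :=
  ∀ i s, (R i).rank (some s) < (R i).rank (μ i) → E.quota s ≤ (assigned μ s).card

/-- Stability: feasible, individually rational, and no blocking pair
(no justified envy and non-wasteful). -/
def Stable (E : Prio I S) (R : I → Pref S) (μ : Matching I S) : Prop :=
  Feasible E μ ∧ IndivRat R μ ∧ ∀ i s, ¬ Blocks E R μ i s

/-- The student-optimal stable matching for the (reported) preferences. -/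
def StudentOptimal (E : Prio I S) (R : I → Pref S) (μ : Matching I S) : Prop :=
  Stable E R μ ∧ ∀ ν, Stable E R ν → ∀ i, (R i).rank (μ i) ≤ (R i).rank (ν i)

open Classical in
/-- The student-proposing deferred acceptance mechanism: by the Gale–Shapley theorem its
outcome is the (unique) student-optimal stable matching of the reported preferences. -/
noncomputable def DA (E : Prio I S) (R : I → Pref S) : Matching I S :=
  if h : ∃ μ, StudentOptimal E R μ then h.choose else fun _ => none

/-- A strict upper bound for the values of a ranking. -/
noncomputable def bnd (p : Pref S) : ℕ := (Finset.univ.sup p.rank) + 1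

lemma rank_lt_bnd (p : Pref S) (x : Option S) : p.rank x < bnd p :=
  Nat.lt_succ_of_le (Finset.le_sup (Finset.mem_univ x))

private lemma mul_add_lt {a K B r : ℕ} (ha : a ≤ K) (hr : r < B) :
    a * B + r < (K + 1) * B := by
  calc a * B + r < a * B + B := by omega
    _ = (a + 1) * B := by ring
    _ ≤ (K + 1) * B := Nat.mul_le_mul (by omega) le_rfl

/-- Is an alternative "inside the market" `A`?  `none` always is. -/
def goodB (A : S → Prop) [DecidablePred A] : Option S → Bool
  | none => true
  | some s => decide (A s)

/-- The preference truncated to the set of schools `A`: schools in `A` (and the outside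
option `none`) keep their relative order, while all schools outside `A` are pushed below
`none` (become unacceptable), keeping their relative order among themselves. -/
noncomputable def trunc (A : S → Prop) [DecidablePred A] (p : Pref S) : Pref S where
  rank x := (if goodB A x then 0 else bnd p) + p.rank x
  inj := by
    intro x y h
    by_cases hx : goodB A x <;> by_cases hy : goodB A y <;>
      simp only [hx, hy, if_true, if_false, Bool.false_eq_true, zero_add] at h
    · exact p.inj h
    · have := rank_lt_bnd p x; omega
    · have := rank_lt_bnd p y; omega
    · exact p.inj (by omega)

/-- The reshuffled preference with respect to a tier structure `t`: acceptable schools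
are grouped by tier in increasing tier order (keeping the original relative order within
each tier) above `none`, and all unacceptable schools are placed below `none`. -/
noncomputable def reshuffle (t : S → ℕ) (p : Pref S) : Pref S where
  rank x :=
    Option.elim x ((Finset.univ.sup t + 1) * bnd p)
      (fun s =>
        if p.rank (some s) < p.rank none then t s * bnd p + p.rank (some s)
        else (Finset.univ.sup t + 1) * bnd p + 1 + p.rank (some s))
  inj := by
    have hB : ∀ x, p.rank x < bnd p := rank_lt_bnd p
    have hK : ∀ s : S, t s ≤ Finset.univ.sup t := fun s => Finset.le_sup (Finset.mem_univ s)
    intro x y h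
    rcases x with _ | s <;> rcases y with _ | s' <;>
      simp only [Option.elim_none, Option.elim_some] at h
    · rfl
    · by_cases hy : p.rank (some s') < p.rank none <;> simp only [hy, if_true, if_false] at h
      · have := mul_add_lt (hK s') (hB (some s')); omega
      · omega
    · by_cases hx : p.rank (some s) < p.rank none <;> simp only [hx, if_true, if_false] at h
      · have := mul_add_lt (hK s) (hB (some s)); omega
      · omega
    · by_cases hx : p.rank (some s) < p.rank none <;>
        by_cases hy : p.rank (some s') < p.rank none <;>
        simp only [hx, hy, if_true, if_false] at h
      · have hts : t s = t s' := by
          rcases Nat.lt_trichotomy (t s) (t s') with h1 | h1 | h1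
          · have h2 : t s * bnd p + p.rank (some s) < t s' * bnd p + p.rank (some s') := by
              have h3 := mul_add_lt (a := t s) (K := t s' - 1) (B := bnd p) (by omega) (hB (some s))
              have h4 : (t s' - 1 + 1) * bnd p = t s' * bnd p := by congr 1; omega
              omega
            omega
          · exact h1
          · have h2 : t s' * bnd p + p.rank (some s') < t s * bnd p + p.rank (some s) := by
              have h3 := mul_add_lt (a := t s') (K := t s - 1) (B := bnd p) (by omega) (hB (some s'))
              have h4 : (t s - 1 + 1) * bnd p = t s * bnd p := by congr 1; omega
              omega
            omega
        rw [hts] at h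
        exact p.inj (by omega)
      · have := mul_add_lt (hK s) (hB (some s)); omega
      · have := mul_add_lt (hK s') (hB (some s')); omega
      · exact p.inj (by omega)

/-- A tier structure assigning each school a tier in `{1, …, T}`, each tier nonempty. -/
def IsTierStructure (t : S → ℕ) (T : ℕ) : Prop :=
  (∀ s, 1 ≤ t s ∧ t s ≤ T) ∧ ∀ k, 1 ≤ k → k ≤ T → ∃ s, t s = k

/-- Rounds `1, …, k` of the tiered deferred acceptance mechanism: in round `k` the
students left unmatched so far participate in the DA mechanism with their preferences
truncated to the tier-`k` schools (already matched students participate with nothing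
acceptable); students matched in earlier rounds keep their assignments. -/
noncomputable def TDAaux (E : Prio I S) (t : S → ℕ) (Q : I → Pref S) : ℕ → Matching I S
  | 0 => fun _ => none
  | k + 1 => fun i =>
      match TDAaux E t Q k i with
      | some s => some s
      | none =>
          DA E (fun j =>
            if TDAaux E t Q k j = none then trunc (fun s => t s = k + 1) (Q j)
            else trunc (fun _ => False) (Q j)) i

/-- The tiered deferred acceptance mechanism under tier structure `t`. -/
noncomputable def TDA (E : Prio I S) (t : S → ℕ) (Q : I → Pref S) : Matching I S :=
  TDAaux E t Q (Finset.univ.sup t)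

/-- `Q` is a (pure) Nash equilibrium of the preference revelation game induced by the
mechanism `f` when the true preferences are `R`: no student can obtain a school he truly
strictly prefers by unilaterally changing his report. -/
def NashEq (R : I → Pref S) (f : (I → Pref S) → Matching I S) (Q : I → Pref S) : Prop :=
  ∀ (i : I) (Qi' : Pref S),
    (R i).rank (f Q i) ≤ (R i).rank (f (Function.update Q i Qi') i)

/-- `μ` is a Nash equilibrium outcome of the revelation game induced by `f` at true
preferences `R`. -/
def NashOutcome (R : I → Pref S) (f : (I → Pref S) → Matching I S) (μ : Matching I S) : Prop :=
  ∃ Q, NashEq R f Q ∧ f Q = μ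

/-- The preference `p` is aligned with the tier structure `t`: a (weakly) more preferred
school always lies in a weakly earlier tier. -/
def AlignedPref (t : S → ℕ) (p : Pref S) : Prop :=
  ∀ s s' : S, p.rank (some s) ≤ p.rank (some s') → t s ≤ t s'

/-- `p` lists exactly the school in `o` (if any) as acceptable. -/
def OnlyAcceptable (p : Pref S) (o : Option S) : Prop :=
  ∀ s : S, (p.rank (some s) < p.rank none ↔ o = some s)

/-- An Ergin cycle of the priority structure among the schools in `A`. -/
def Cycle (E : Prio I S) (A : S → Prop) : Prop :=
  ∃ a b : S, A a ∧ A b ∧ a ≠ b ∧ ∃ i j k : I,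
    E.higher a i j ∧ E.higher a j k ∧ E.higher b k i ∧
    ∃ Ia Ib : Finset I, Disjoint Ia Ib ∧
      (∀ l ∈ Ia, l ≠ i ∧ l ≠ j ∧ l ≠ k ∧ E.higher a l j) ∧
      (∀ l ∈ Ib, l ≠ i ∧ l ≠ j ∧ l ≠ k ∧ E.higher b l i) ∧
      Ia.card = E.quota a - 1 ∧ Ib.card = E.quota b - 1

/-- Within-tier acyclicity of a generalized priority structure: no Ergin cycle among the
schools of any single tier. -/
def WithinTierAcyclic (E : Prio I S) (t : S → ℕ) : Prop :=
  ∀ k : ℕ, ¬ Cycle E (fun s => t s = k)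

/-- The (strict) preference `pr` of school `s` over sets of students is a responsive
extension of its priorities. -/
def Responsive (E : Prio I S) (s : S) (pr : Finset I → Finset I → Prop) : Prop :=
  ∀ (J : Finset I) (i j : I), i ∉ J → j ∉ J → E.higher s i j →
    pr (insert i J) (insert j J)

/-- `t` is a refinement of `t'`: `t'` ranks `a` in a strictly later tier than `b` only
if `t` does. -/
def Refines (t t' : S → ℕ) : Prop :=
  ∀ a b : S, t' b < t' a → t b < t a


/-! ### Auxiliary machinery for Statement 1 -/

section Aux

lemma trunc_rank_none (A : S → Prop) [DecidablePred A] (p : Pref S) :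
    (trunc A p).rank none = p.rank none := by
  simp [trunc, goodB]

lemma trunc_rank_some_good (A : S → Prop) [DecidablePred A] (p : Pref S) {s : S} (h : A s) :
    (trunc A p).rank (some s) = p.rank (some s) := by
  simp [trunc, goodB, h]

lemma trunc_rank_some_bad (A : S → Prop) [DecidablePred A] (p : Pref S) {s : S} (h : ¬ A s) :
    (trunc A p).rank (some s) = bnd p + p.rank (some s) := by
  simp [trunc, goodB, h]

/-- A preference that lists exactly the school in `o` (if any) as acceptable,
with that school on top. -/
noncomputable def onlyPref (e : S ↪ ℕ) (o : Option S) : Pref S where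
  rank x := if x = o then 0 else 1 + Option.elim x 0 (fun s => e s + 1)
  inj := by
    intro x y h
    dsimp only at h
    by_cases hx : x = o <;> by_cases hy : y = o
    · rw [hx, hy]
    · rw [if_pos hx, if_neg hy] at h; omega
    · rw [if_neg hx, if_pos hy] at h; omega
    · rw [if_neg hx, if_neg hy] at h
      rcases x with _ | s <;> rcases y with _ | s' <;>
        simp only [Option.elim_none, Option.elim_some] at h
      · rfl
      · omega
      · omega
      · have : e s = e s' := by omega
        rw [e.injective this]

lemma onlyPref_rank_self (e : S ↪ ℕ) (o : Option S) : (onlyPref e o).rank o = 0 :=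
  if_pos rfl

lemma onlyPref_rank_none_of_some (e : S ↪ ℕ) (s : S) :
    (onlyPref e (some s)).rank none = 1 := by
  simp [onlyPref]

lemma onlyPref_acc_iff (e : S ↪ ℕ) (o : Option S) (s : S) :
    (onlyPref e o).rank (some s) < (onlyPref e o).rank none ↔ o = some s := by
  by_cases h : some s = o
  · subst h
    rw [onlyPref_rank_self, onlyPref_rank_none_of_some]
    simp
  · constructor
    · intro hlt
      exfalso
      have h1 : (onlyPref e o).rank (some s) = 1 + (e s + 1) := if_neg h
      have h2 : (onlyPref e o).rank none ≤ 1 := by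
        by_cases hn : (none : Option S) = o
        · rw [show (onlyPref e o).rank none = 0 from if_pos hn]; omega
        · rw [show (onlyPref e o).rank none = 1 + 0 from if_neg hn]
      omega
    · intro ho; exact absurd ho.symm h

lemma DA_eq_of_uniqueStable (E : Prio I S) (P : I → Pref S) (ν : Matching I S)
    (hν : Stable E P ν) (huniq : ∀ ν', Stable E P ν' → ν' = ν) : DA E P = ν := by
  have hSO : StudentOptimal E P ν := ⟨hν, fun ν' h i => by rw [huniq ν' h]⟩
  have hex : ∃ μ, StudentOptimal E P μ := ⟨ν, hSO⟩
  rw [DA, dif_pos hex]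
  exact huniq _ hex.choose_spec.1

/-- Individual-rationality characterization of stable matchings for a "round profile". -/
lemma stable_round_some (E : Prio I S) (t : S → ℕ) (Q : I → Pref S) (m : Matching I S)
    (k : ℕ) {ν : Matching I S}
    (hν : Stable E (fun l => if m l = none then trunc (fun s => t s = k) (Q l)
        else trunc (fun _ => False) (Q l)) ν)
    {j : I} {s : S} (h : ν j = some s) :
    m j = none ∧ t s = k ∧ (Q j).rank (some s) < (Q j).rank none := by
  have hIR := hν.2.1 j
  simp only [h] at hIR
  by_cases hm : m j = none
  · rw [if_pos hm, trunc_rank_none] at hIR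
    by_cases hts : t s = k
    · rw [trunc_rank_some_good (fun s => t s = k) _ hts] at hIR
      refine ⟨hm, hts, lt_of_le_of_ne hIR ?_⟩
      intro hEq
      exact absurd ((Q j).inj hEq) (by simp)
    · rw [trunc_rank_some_bad (fun s => t s = k) _ hts] at hIR
      have := rank_lt_bnd (Q j) none
      omega
  · rw [if_neg hm, trunc_rank_none, trunc_rank_some_bad (fun _ => False) _ not_false] at hIR
    have := rank_lt_bnd (Q j) none
    omega

/-- Any school that a student holds at some stage of TDA was obtained in some round,
as part of a matching stable with respect to that round's profile. -/
lemma TDAaux_some (E : Prio I S) (t : S → ℕ) (Q : I → Pref S) :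
    ∀ (r : ℕ) (j : I) (s : S), TDAaux E t Q r j = some s →
      (Q j).rank (some s) < (Q j).rank none ∧ t s ≤ r ∧
      ∃ (k : ℕ) (ν : Matching I S), t s = k + 1 ∧ TDAaux E t Q k j = none ∧
        Stable E (fun l => if TDAaux E t Q k l = none then trunc (fun s' => t s' = k + 1) (Q l)
          else trunc (fun _ => False) (Q l)) ν ∧ ν j = some s := by
  intro r
  induction r with
  | zero => intro j s h; simp [TDAaux] at h
  | succ r IH =>
    intro j s h
    simp only [TDAaux] at h
    cases hprev : TDAaux E t Q r j with
    | some s0 =>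
      simp only [hprev] at h
      obtain ⟨h1, h2, h3⟩ := IH j s (hprev.trans h)
      exact ⟨h1, by omega, h3⟩
    | none =>
      simp only [hprev] at h
      rw [DA] at h
      by_cases hex : ∃ μ', StudentOptimal E
          (fun l => if TDAaux E t Q r l = none then trunc (fun s' => t s' = r + 1) (Q l)
            else trunc (fun _ => False) (Q l)) μ'
      · rw [dif_pos hex] at h
        have hstab := hex.choose_spec.1
        obtain ⟨_, hts, hacc⟩ := stable_round_some E t Q (TDAaux E t Q r) (r + 1) hstab h
        exact ⟨hacc, by omega, r, hex.choose, hts, hprev, hstab, h⟩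
      · rw [dif_neg hex] at h
        exact absurd h (by simp)

/-- The exact outcome of the DA round of TDA when everyone reports `onlyPref` of his
assignment under the stable matching `μ`. -/
lemma round_exact (E : Prio I S) (t : S → ℕ) (μ : Matching I S) (e : S ↪ ℕ)
    (hfeas : Feasible E μ) (r : ℕ) :
    DA E (fun l => if (μ l).bind (fun s => if t s ≤ r then some s else none) = none
        then trunc (fun s => t s = r + 1) (onlyPref e (μ l))
        else trunc (fun _ => False) (onlyPref e (μ l)))
      = fun l => if (μ l).bind (fun s => if t s ≤ r then some s else none) = none
        then (μ l).bind (fun s => if t s = r + 1 then some s else none) else none := by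
  set prev : Matching I S := fun l => (μ l).bind (fun s => if t s ≤ r then some s else none)
    with hprevdef
  set P : I → Pref S := fun l => if prev l = none
      then trunc (fun s => t s = r + 1) (onlyPref e (μ l))
      else trunc (fun _ => False) (onlyPref e (μ l)) with hPdef
  set ν : Matching I S := fun l => if prev l = none
      then (μ l).bind (fun s => if t s = r + 1 then some s else none) else none with hνdef
  have fact1 : ∀ l s', ν l = some s' → prev l = none ∧ μ l = some s' ∧ t s' = r + 1 := by
    intro l s' hl
    rw [hνdef] at hl
    simp only at hl
    by_cases hp : prev l = none
    · rw [if_pos hp] at hl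
      rcases hμl : μ l with _ | s0
      · rw [hμl] at hl; simp at hl
      · rw [hμl] at hl
        simp only [Option.bind_some] at hl
        by_cases ht0 : t s0 = r + 1
        · rw [if_pos ht0] at hl
          exact ⟨hp, hl, by rwa [Option.some_inj.mp hl] at ht0⟩
        · rw [if_neg ht0] at hl; exact absurd hl (by simp)
    · rw [if_neg hp] at hl; exact absurd hl (by simp)
  have char : ∀ (ν' : Matching I S), Stable E P ν' → ∀ l s', ν' l = some s' →
      prev l = none ∧ t s' = r + 1 ∧ μ l = some s' := by
    intro ν' hν' l s' hl
    obtain ⟨hm, hts, hacc⟩ := stable_round_some E t (fun l => onlyPref e (μ l)) prev (r + 1)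
      hν' hl
    exact ⟨hm, hts, (onlyPref_acc_iff e (μ l) s').mp hacc⟩
  have hPgood : ∀ l s', prev l = none → t s' = r + 1 →
      (P l).rank (some s') = (onlyPref e (μ l)).rank (some s') := by
    intro l s' hp hts
    rw [hPdef]
    simp only
    rw [if_pos hp, trunc_rank_some_good (fun s => t s = r + 1) _ hts]
  have hνStable : Stable E P ν := by
    refine ⟨?_, ?_, ?_⟩
    · -- Feasible
      intro s'
      have hsub : assigned ν s' ⊆ assigned μ s' := by
        intro l hl
        rw [assigned, Finset.mem_filter] at hl ⊢
        exact ⟨hl.1, (fact1 l s' hl.2).2.1⟩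
      exact le_trans (Finset.card_le_card hsub) (hfeas s')
    · -- IndivRat
      intro l
      cases hl : ν l with
      | none => exact le_rfl
      | some s' =>
        obtain ⟨hp, hμl, hts⟩ := fact1 l s' hl
        rw [hPgood l s' hp hts, hμl, onlyPref_rank_self]
        exact Nat.zero_le _
    · -- no blocks
      intro l s' hB
      obtain ⟨hpref, _⟩ := hB
      by_cases hp : prev l = none
      · cases hl : ν l with
        | some s0 =>
          obtain ⟨_, hμl, hts0⟩ := fact1 l s0 hl
          rw [hl, hPgood l s0 hp hts0, hμl, onlyPref_rank_self] at hpref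
          omega
        | none =>
          rw [hl] at hpref
          have hPl : P l = trunc (fun s => t s = r + 1) (onlyPref e (μ l)) := by
            rw [hPdef]; simp only; rw [if_pos hp]
          rw [hPl, trunc_rank_none] at hpref
          by_cases hts : t s' = r + 1
          · rw [trunc_rank_some_good (fun s => t s = r + 1) _ hts] at hpref
            have hμl : μ l = some s' := (onlyPref_acc_iff e (μ l) s').mp hpref
            rw [hνdef] at hl
            simp only at hl
            rw [if_pos hp, hμl] at hl
            simp only [Option.bind_some, if_pos hts] at hl
            exact absurd hl (by simp)
          · rw [trunc_rank_some_bad (fun s => t s = r + 1) _ hts] at hpref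
            have := rank_lt_bnd (onlyPref e (μ l)) none
            omega
      · have hl : ν l = none := by rw [hνdef]; simp only; rw [if_neg hp]
        have hPl : P l = trunc (fun _ => False) (onlyPref e (μ l)) := by
          rw [hPdef]; simp only; rw [if_neg hp]
        rw [hl, hPl, trunc_rank_none, trunc_rank_some_bad (fun _ => False) _ not_false] at hpref
        have := rank_lt_bnd (onlyPref e (μ l)) none
        omega
  have hUniq : ∀ ν', Stable E P ν' → ν' = ν := by
    intro ν' hν'
    funext l
    cases hl : ν' l with
    | some s' =>
      obtain ⟨hp, hts, hμl⟩ := char ν' hν' l s' hl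
      rw [hνdef]
      simp only
      rw [if_pos hp, hμl]
      simp [hts]
    | none =>
      cases hνl : ν l with
      | none => rfl
      | some s0 =>
        exfalso
        obtain ⟨hp, hμl, hts0⟩ := fact1 l s0 hνl
        apply hν'.2.2 l s0
        constructor
        · rw [hl, hPgood l s0 hp hts0, hμl, onlyPref_rank_self]
          have hPn : (P l).rank none = (onlyPref e (μ l)).rank none := by
            rw [hPdef]; simp only; rw [if_pos hp, trunc_rank_none]
          rw [hPn, hμl, onlyPref_rank_none_of_some]
          omega
        · left
          have hsub : assigned ν' s0 ⊆ assigned μ s0 := by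
            intro l' hl'
            rw [assigned, Finset.mem_filter] at hl' ⊢
            exact ⟨hl'.1, (char ν' hν' l' s0 hl'.2).2.2⟩
          have hlmem : l ∈ assigned μ s0 := Finset.mem_filter.2 ⟨Finset.mem_univ l, hμl⟩
          have hlnot : l ∉ assigned ν' s0 := by
            rw [assigned, Finset.mem_filter]
            intro hh
            rw [hl] at hh
            exact absurd hh.2 (by simp)
          have hss : assigned ν' s0 ⊂ assigned μ s0 :=
            (Finset.ssubset_iff_of_subset hsub).2 ⟨l, hlmem, hlnot⟩
          exact lt_of_lt_of_le (Finset.card_lt_card hss) (hfeas s0)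
  exact DA_eq_of_uniqueStable E P ν hνStable hUniq

/-- When everyone reports `onlyPref` of his assignment under a feasible matching `μ`,
the TDA rounds exactly implement `μ` tier by tier. -/
lemma TDAaux_honest (E : Prio I S) (t : S → ℕ) (μ : Matching I S) (e : S ↪ ℕ)
    (hfeas : Feasible E μ) (h1 : ∀ s, 1 ≤ t s) :
    ∀ (r : ℕ) (j : I), TDAaux E t (fun l => onlyPref e (μ l)) r j
      = (μ j).bind (fun s => if t s ≤ r then some s else none) := by
  intro r
  induction r with
  | zero =>
    intro j
    rcases hμ : μ j with _ | s
    · simp [TDAaux]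
    · have := h1 s
      simp only [TDAaux, Option.bind_some]
      rw [if_neg (by omega)]
  | succ r IH =>
    intro j
    rw [TDAaux]
    simp only [IH]
    rw [round_exact E t μ e hfeas r]
    rcases hμ : μ j with _ | s
    · simp [hμ]
    · by_cases h : t s ≤ r
      · simp [hμ, h, Nat.le_succ_of_le h]
      · by_cases h2 : t s = r + 1
        · simp [hμ, h, h2]
        · have h3 : ¬ t s ≤ r + 1 := by omega
          simp [hμ, h, h2, h3]

end Aux

/-- Every stable matching is a Nash equilibrium outcome of the TDA
mechanism, for any tier structure. -/
theorem stable_subset_TDA_NashOutcomes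
    (E : Prio I S) (t : S → ℕ) (T : ℕ) (ht : IsTierStructure t T)
    (R : I → Pref S) (μ : Matching I S) (hstable : Stable E R μ) :
    NashOutcome R (TDA E t) μ := by
  obtain ⟨hfeas, hIR, hnb⟩ := hstable
  have h1 : ∀ s, 1 ≤ t s := fun s => (ht.1 s).1
  set e : S ↪ ℕ := (Fintype.equivFin S).toEmbedding.trans (Fin.valEmbedding) with hedef
  set Q : I → Pref S := fun l => onlyPref e (μ l) with hQdef
  have hTDAQ : ∀ j, TDA E t Q j = μ j := by
    intro j
    rw [TDA, TDAaux_honest E t μ e hfeas h1]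
    rcases hμ : μ j with _ | s
    · rfl
    · simp only [Option.bind_some]
      rw [if_pos (Finset.le_sup (Finset.mem_univ s))]
  refine ⟨Q, ?_, funext hTDAQ⟩
  intro i Qi'
  rw [hTDAQ i]
  set Q' : I → Pref S := Function.update Q i Qi' with hQ'def
  by_contra hcon
  push_neg at hcon
  cases ho : TDA E t Q' i with
  | none =>
    rw [ho] at hcon
    exact absurd (hIR i) (by omega)
  | some s =>
    rw [ho] at hcon
    rw [TDA] at ho
    obtain ⟨-, -, k, ν, hts, hinone, hstab, hνi⟩ :=
      TDAaux_some E t Q' (Finset.univ.sup t) i s ho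
    have hμine : μ i ≠ some s := by
      intro h
      rw [h] at hcon
      omega
    have hnbi := hnb i s
    rw [Blocks] at hnbi
    push_neg at hnbi
    obtain ⟨hq, hhi⟩ := hnbi hcon
    have hQ'ne : ∀ j, j ≠ i → Q' j = onlyPref e (μ j) := by
      intro j hj
      rw [hQ'def, Function.update_of_ne hj, hQdef]
    have hF : ∀ j, μ j = some s → j ≠ i ∧ E.higher s j i := by
      intro j hj
      have hne : j ≠ i := fun h => hμine (h ▸ hj)
      have hnh := hhi j hj
      refine ⟨hne, ?_⟩
      rw [Prio.higher] at hnh ⊢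
      have hpne : E.prank s j ≠ E.prank s i := fun h => hne (E.inj s h)
      omega
    have hjnone : ∀ j, μ j = some s → TDAaux E t Q' k j = none := by
      intro j hj
      cases hjk : TDAaux E t Q' k j with
      | none => rfl
      | some s'' =>
        exfalso
        obtain ⟨hacc, hle, -⟩ := TDAaux_some E t Q' k j s'' hjk
        have hne := (hF j hj).1
        rw [hQ'ne j hne] at hacc
        have : μ j = some s'' := (onlyPref_acc_iff e (μ j) s'').mp hacc
        rw [hj] at this
        rw [Option.some_inj.mp this] at hts
        omega
    have hi_mem : i ∈ assigned ν s := Finset.mem_filter.2 ⟨Finset.mem_univ i, hνi⟩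
    obtain ⟨j, hjF, hjν⟩ : ∃ j, μ j = some s ∧ ν j ≠ some s := by
      by_contra hc
      push_neg at hc
      have hins : insert i (assigned μ s) ⊆ assigned ν s := by
        intro l hl
        rcases Finset.mem_insert.mp hl with hl | hl
        · rw [hl]; exact hi_mem
        · rw [assigned, Finset.mem_filter] at hl ⊢
          exact ⟨hl.1, hc l hl.2⟩
      have hinot : i ∉ assigned μ s := by
        rw [assigned, Finset.mem_filter]
        intro hh
        exact hμine hh.2
      have hcard1 := Finset.card_le_card hins
      rw [Finset.card_insert_of_notMem hinot] at hcard1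
      have hcard2 := hstab.1 s
      have hcard3 := hfeas s
      omega
    have hjne := (hF j hjF).1
    have hjnone' := hjnone j hjF
    apply hstab.2.2 j s
    constructor
    · -- preference condition
      show (if TDAaux E t Q' k j = none then trunc (fun s' => t s' = k + 1) (Q' j)
          else trunc (fun _ => False) (Q' j)).rank (some s)
        < (if TDAaux E t Q' k j = none then trunc (fun s' => t s' = k + 1) (Q' j)
          else trunc (fun _ => False) (Q' j)).rank (ν j)
      rw [if_pos hjnone', hQ'ne j hjne, hjF]
      have hps : (trunc (fun s' => t s' = k + 1) (onlyPref e (some s))).rank (some s) = 0 := by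
        rw [trunc_rank_some_good (fun s' => t s' = k + 1) _ hts, onlyPref_rank_self]
      rw [hps]
      have hne0 : (trunc (fun s' => t s' = k + 1) (onlyPref e (some s))).rank (ν j) ≠ 0 := by
        intro h0
        have h0' : (trunc (fun s' => t s' = k + 1) (onlyPref e (some s))).rank (ν j)
            = (trunc (fun s' => t s' = k + 1) (onlyPref e (some s))).rank (some s) := by
          rw [h0, hps]
        exact hjν ((trunc (fun s' => t s' = k + 1) (onlyPref e (some s))).inj h0')
      omega
    · exact Or.inr ⟨i, hνi, (hF j hjF).2⟩

end SchoolChoice
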